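/- Let σ, τ : ℝ → [0,∞) be Schwartz functions vanishing on (−∞,0), and let a, b ≥ 0 be real numbers. Then sup_{x ≥ a+b} |(σ∗τ)(x) − (∫_ℝ σ)·τ(x)| ≤ a·(∫_ℝ σ)·sup_{y ≥ b} |τ'(y)| + 2·(∫_a^∞ σ(x) dx)·sup_{x∈ℝ} τ(x). -/

import Mathlib

open MeasureTheory

/-- Convolution of functions on `ℝ`. -/
noncomputable def rconv (f g : ℝ → ℝ) : ℝ → ℝ := fun x => ∫ y : ℝ, f y * g (x - y)

theorem real_integration_by_parts (σ τ : SchwartzMap ℝ ℝ)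
    (hσ0 : ∀ x, 0 ≤ σ x) (hτ0 : ∀ x, 0 ≤ τ x)
    (hσsupp : ∀ x : ℝ, x < 0 → σ x = 0) (hτsupp : ∀ x : ℝ, x < 0 → τ x = 0)
    (a b : ℝ) (ha : 0 ≤ a) (hb : 0 ≤ b) :
    ∀ x : ℝ, a + b ≤ x →
      |rconv (fun y => σ y) (fun y => τ y) x - (∫ y : ℝ, σ y) * τ x| ≤
        a * (∫ y : ℝ, σ y) * (⨆ y : Set.Ici b, |deriv (fun z => τ z) y|) +
          2 * (∫ y in Set.Ici a, σ y) * ⨆ x : ℝ, τ x := by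
  intro x hx
  set S := ⨆ y : Set.Ici b, |deriv (fun z => τ z) y| with hSdef
  set T := ⨆ x : ℝ, τ x with hTdef
  -- boundedness of τ and deriv τ
  set Cτ : ℝ := ‖τ.toBoundedContinuousFunction‖ with hCτdef
  have hCτ : ∀ y : ℝ, |τ y| ≤ Cτ := by
    intro y
    simpa [Real.norm_eq_abs] using τ.toBoundedContinuousFunction.norm_coe_le_norm y
  set Cd : ℝ := ‖(SchwartzMap.derivCLM ℝ ℝ τ).toBoundedContinuousFunction‖ with hCddef
  have hCd : ∀ y : ℝ, |deriv (fun z => τ z) y| ≤ Cd := by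
    intro y
    have := (SchwartzMap.derivCLM ℝ ℝ τ).toBoundedContinuousFunction.norm_coe_le_norm y
    simpa [Real.norm_eq_abs, SchwartzMap.derivCLM_apply] using this
  have hTbdd : BddAbove (Set.range fun x : ℝ => τ x) := by
    refine ⟨Cτ, ?_⟩
    rintro t ⟨y, rfl⟩
    exact (le_abs_self _).trans (hCτ y)
  have hSbdd : BddAbove (Set.range fun y : Set.Ici b => |deriv (fun z => τ z) (y : ℝ)|) := by
    refine ⟨Cd, ?_⟩
    rintro t ⟨y, rfl⟩
    exact hCd y
  have hT : ∀ y : ℝ, τ y ≤ T := fun y => le_ciSup hTbdd y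
  have hS : ∀ z : ℝ, b ≤ z → |deriv (fun z => τ z) z| ≤ S := fun z hz =>
    le_ciSup hSbdd (⟨z, hz⟩ : Set.Ici b)
  have hT0 : 0 ≤ T := (hτ0 0).trans (hT 0)
  have hS0 : 0 ≤ S := (abs_nonneg _).trans (hS b le_rfl)
  -- integrability
  have hσint : Integrable (fun y => σ y) := σ.integrable
  have hmeas : AEStronglyMeasurable (fun y : ℝ => τ (x - y)) volume :=
    (τ.continuous.comp (continuous_const.sub continuous_id)).aestronglyMeasurable
  have hint1 : Integrable (fun y : ℝ => σ y * τ (x - y)) := by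
    have := hσint.bdd_mul (f := fun y : ℝ => τ (x - y)) (c := Cτ) hmeas
      (Filter.Eventually.of_forall fun y => by simpa [Real.norm_eq_abs] using hCτ (x - y))
    simpa [mul_comm] using this
  have hint2 : Integrable (fun y : ℝ => σ y * τ x) := hσint.mul_const _
  have hgint : Integrable (fun y : ℝ => σ y * (τ (x - y) - τ x)) := by
    simpa [mul_sub, Pi.sub_def] using hint1.sub hint2
  -- rewrite the difference as one integral
  have key : rconv (fun y => σ y) (fun y => τ y) x - (∫ y : ℝ, σ y) * τ x
      = ∫ y : ℝ, σ y * (τ (x - y) - τ x) := by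
    rw [rconv]
    simp only [mul_sub]
    rw [integral_sub hint1 hint2, integral_mul_const]
  rw [key]
  have habs : |∫ y : ℝ, σ y * (τ (x - y) - τ x)| ≤ ∫ y : ℝ, |σ y * (τ (x - y) - τ x)| := by
    have := norm_integral_le_integral_norm (μ := volume) (fun y : ℝ => σ y * (τ (x - y) - τ x))
    simp only [Real.norm_eq_abs] at this
    exact this
  have hsplit : (∫ y : ℝ, |σ y * (τ (x - y) - τ x)|)
      = (∫ y in Set.Iio a, |σ y * (τ (x - y) - τ x)|)
        + ∫ y in Set.Ici a, |σ y * (τ (x - y) - τ x)| :=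
    (intervalIntegral.integral_Iio_add_Ici hgint.abs.integrableOn hgint.abs.integrableOn).symm
  -- bound on Iio a
  have hbound1 : (∫ y in Set.Iio a, |σ y * (τ (x - y) - τ x)|)
      ≤ ∫ y in Set.Iio a, σ y * (a * S) := by
    refine setIntegral_mono_on hgint.abs.integrableOn
      ((hσint.mul_const _).integrableOn) measurableSet_Iio ?_
    intro y hy
    simp only [Set.mem_Iio] at hy
    rw [abs_mul, abs_of_nonneg (hσ0 y)]
    rcases lt_or_ge y 0 with h0 | h0
    · simp [hσsupp y h0]
    · have hmvt : |τ (x - y) - τ x| ≤ S * y := by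
        have hxb : x ∈ Set.Ici b := by simp only [Set.mem_Ici]; linarith
        have hxyb : x - y ∈ Set.Ici b := by simp only [Set.mem_Ici]; linarith
        have := Convex.norm_image_sub_le_of_norm_deriv_le (f := fun z => τ z)
          (fun z _ => τ.differentiable.differentiableAt)
          (fun z hz => hS z hz) (convex_Ici b) hxb hxyb
        calc |τ (x - y) - τ x| ≤ S * ‖(x - y) - x‖ := this
          _ = S * y := by rw [show (x - y) - x = -y by ring, norm_neg, Real.norm_eq_abs,
            abs_of_nonneg h0]
      calc σ y * |τ (x - y) - τ x| ≤ σ y * (S * y) :=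
            mul_le_mul_of_nonneg_left hmvt (hσ0 y)
        _ ≤ σ y * (a * S) := by
            apply mul_le_mul_of_nonneg_left _ (hσ0 y)
            rw [mul_comm a S]
            exact mul_le_mul_of_nonneg_left hy.le hS0
  have hbound1' : (∫ y in Set.Iio a, σ y * (a * S)) ≤ a * (∫ y : ℝ, σ y) * S := by
    rw [integral_mul_const]
    have h1 : (∫ y in Set.Iio a, σ y) ≤ ∫ y : ℝ, σ y :=
      setIntegral_le_integral hσint (Filter.Eventually.of_forall hσ0)
    have h2 : 0 ≤ a * S := mul_nonneg ha hS0
    calc (∫ y in Set.Iio a, σ y) * (a * S) ≤ (∫ y : ℝ, σ y) * (a * S) :=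
          mul_le_mul_of_nonneg_right h1 h2
      _ = a * (∫ y : ℝ, σ y) * S := by ring
  -- bound on Ici a
  have hbound2 : (∫ y in Set.Ici a, |σ y * (τ (x - y) - τ x)|)
      ≤ ∫ y in Set.Ici a, σ y * (2 * T) := by
    refine setIntegral_mono_on hgint.abs.integrableOn
      ((hσint.mul_const _).integrableOn) measurableSet_Ici ?_
    intro y _
    rw [abs_mul, abs_of_nonneg (hσ0 y)]
    apply mul_le_mul_of_nonneg_left _ (hσ0 y)
    calc |τ (x - y) - τ x| ≤ |τ (x - y)| + |τ x| := abs_sub _ _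
      _ = τ (x - y) + τ x := by rw [abs_of_nonneg (hτ0 _), abs_of_nonneg (hτ0 _)]
      _ ≤ T + T := add_le_add (hT _) (hT _)
      _ = 2 * T := by ring
  have hbound2' : (∫ y in Set.Ici a, σ y * (2 * T)) = 2 * (∫ y in Set.Ici a, σ y) * T := by
    rw [integral_mul_const]; ring
  calc |∫ y : ℝ, σ y * (τ (x - y) - τ x)| ≤ ∫ y : ℝ, |σ y * (τ (x - y) - τ x)| := habs
    _ = _ + _ := hsplit
    _ ≤ a * (∫ y : ℝ, σ y) * S + 2 * (∫ y in Set.Ici a, σ y) * T := by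
        apply add_le_add (hbound1.trans hbound1')
        rw [← hbound2']; exact hbound2
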